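/- Let k be a field, V = V_0 ⊕ ⋯ ⊕ V_l with Fil^i V = ⊕_{j≥i} V_j, and 𝕄 an endomorphism whose block matrix M is special lower-triangular of type ≤ s. Then for every i ≤ l − s + 1, im(𝕄) ∩ Fil^i V ⊆ (im(𝕄) ∩ Fil^{i+1} V) + 𝕄(Fil^{i+s} V). -/

import Mathlib

/-- The endomorphism of `V = ⊕_i k^{d_i}` determined by a block matrix
`a = (a_{i,j})` with `a_{i,j} ∈ M_{d_i × d_j}(k)`. -/
noncomputable def blockEnd (k : Type*) [Field k] (l : ℕ) (d : Fin (l + 1) → ℕ)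
    (a : ∀ i j : Fin (l + 1), Matrix (Fin (d i)) (Fin (d j)) k) :
    (∀ i : Fin (l + 1), Fin (d i) → k) →ₗ[k] (∀ i : Fin (l + 1), Fin (d i) → k) :=
  LinearMap.pi fun i => ∑ j : Fin (l + 1), (Matrix.mulVecLin (a i j)) ∘ₗ LinearMap.proj j

/-- The decreasing filtration `Fil^m V = ⊕_{j ≥ m} V_j` (with `Fil^m V = V` for
`m ≤ 0` and `Fil^m V = 0` for `m > l`). -/
def blockFil (k : Type*) [Field k] (l : ℕ) (d : Fin (l + 1) → ℕ) (m : ℤ) :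
    Submodule k (∀ i : Fin (l + 1), Fin (d i) → k) where
  carrier := {v | ∀ i : Fin (l + 1), (i : ℤ) < m → v i = 0}
  add_mem' := by
    intro x y hx hy i him
    simp [Pi.add_apply, hx i him, hy i him]
  zero_mem' := by intro i _; rfl
  smul_mem' := by
    intro c x hx i him
    simp [Pi.smul_apply, hx i him]



section Aux

variable {k : Type*} [Field k] {l s : ℕ} {d : Fin (l + 1) → ℕ}
  {a : ∀ i j : Fin (l + 1), Matrix (Fin (d i)) (Fin (d j)) k}

lemma mem_blockFil {m : ℤ} {v : ∀ i : Fin (l + 1), Fin (d i) → k} :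
    v ∈ blockFil k l d m ↔ ∀ i : Fin (l + 1), (i : ℤ) < m → v i = 0 := Iff.rfl

lemma blockFil_antitone : Antitone (blockFil k l d) := by
  intro m m' h v hv i hi
  exact hv i (lt_of_lt_of_le hi h)

lemma blockFil_eq_top {m : ℤ} (hm : m ≤ 0) : blockFil k l d m = ⊤ := by
  refine eq_top_iff.2 fun v _ i hi => absurd hi ?_
  have h0 : (0:ℤ) ≤ (i:ℤ) := Int.natCast_nonneg _
  omega

lemma blockEnd_apply (v : ∀ i : Fin (l + 1), Fin (d i) → k) (i : Fin (l + 1)) :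
    blockEnd k l d a v i = ∑ j : Fin (l + 1), (a i j).mulVec (v j) := by
  simp [blockEnd, LinearMap.pi_apply, LinearMap.sum_apply]

lemma map_blockEnd_le (htri : ∀ i j : Fin (l + 1), (i : ℕ) + s < (j : ℕ) → a i j = 0)
    (m : ℤ) :
    Submodule.map (blockEnd k l d a) (blockFil k l d m) ≤ blockFil k l d (m - s) := by
  rintro _ ⟨v, hv, rfl⟩ i hi
  rw [blockEnd_apply]
  refine Finset.sum_eq_zero fun j _ => ?_
  by_cases hj : (j : ℤ) < m
  · rw [hv j hj, Matrix.mulVec_zero]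
  · rw [htri i j (by omega), Matrix.zero_mulVec]

lemma blockEnd_proj (htri : ∀ i j : Fin (l + 1), (i : ℕ) + s < (j : ℕ) → a i j = 0)
    {m : ℕ} (hs1 : s ≤ m) (hm : m ≤ l)
    {v : ∀ i : Fin (l + 1), Fin (d i) → k} (hv : v ∈ blockFil k l d m) :
    blockEnd k l d a v ⟨m - s, by omega⟩
      = (a ⟨m - s, by omega⟩ ⟨m, by omega⟩).mulVec (v ⟨m, by omega⟩) := by
  rw [blockEnd_apply, Finset.sum_eq_single (⟨m, by omega⟩ : Fin (l + 1))]
  · intro j _ hj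
    have hj0 : (j : ℕ) ≠ m := fun h => hj (Fin.ext h)
    by_cases hj' : (j : ℤ) < m
    · rw [hv j hj', Matrix.mulVec_zero]
    · rw [htri _ j (show m - s + s < (j : ℕ) by omega), Matrix.zero_mulVec]
  · intro h
    exact absurd (Finset.mem_univ _) h

lemma rank_congr {i : Fin (l + 1)} {j j' : Fin (l + 1)} (h : j = j') :
    (a i j).rank = (a i j').rank := by subst h; rfl

variable (a s) in
noncomputable def rnk (i : Fin (l + 1)) : ℕ :=
  if h : (i : ℕ) + s ≤ l then (a i ⟨(i : ℕ) + s, Nat.lt_succ_of_le h⟩).rank else 0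

variable (a s) in
/-- partial sums of ranks -/
noncomputable def TT (m : ℕ) : ℕ :=
  ∑ i : Fin (l + 1), if m ≤ (i : ℕ) + s then rnk s a i else 0

variable (a) in
noncomputable def NN (m : ℕ) :
    Submodule k (∀ i : Fin (l + 1), Fin (d i) → k) :=
  Submodule.map (blockEnd k l d a) (blockFil k l d (m : ℤ))

lemma TT_zero :
    TT s a 0 = ∑ i : Fin (l + 1),
      if h : (i : ℕ) + s ≤ l then (a i ⟨(i : ℕ) + s, Nat.lt_succ_of_le h⟩).rank else 0 := by
  refine Finset.sum_congr rfl fun i _ => ?_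
  rw [if_pos (Nat.zero_le _)]
  rfl

lemma TT_lt {m : ℕ} (hm : m < s) : TT s a m = TT s a (m + 1) := by
  refine Finset.sum_congr rfl fun i _ => ?_
  rw [if_pos (by omega), if_pos (by omega)]

lemma TT_gt {m : ℕ} (hm : l < m) : TT s a m = 0 := by
  refine Finset.sum_eq_zero fun i _ => ?_
  by_cases h : (i : ℕ) + s ≤ l
  · exact if_neg (by omega)
  · by_cases h2 : m ≤ (i : ℕ) + s
    · rw [if_pos h2, rnk, dif_neg h]
    · exact if_neg h2

lemma rnk_eq {m : ℕ} (hs1 : s ≤ m) (hm : m ≤ l) :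
    rnk s a ⟨m - s, by omega⟩ = (a ⟨m - s, by omega⟩ ⟨m, by omega⟩).rank := by
  rw [rnk, dif_pos (show m - s + s ≤ l by omega)]
  exact rank_congr (Fin.ext (show m - s + s = m by omega))

lemma TT_succ {m : ℕ} (hs1 : s ≤ m) (hm : m ≤ l) :
    TT s a m = (a ⟨m - s, by omega⟩ ⟨m, by omega⟩).rank + TT s a (m + 1) := by
  have hmem : (⟨m - s, by omega⟩ : Fin (l + 1)) ∈ (Finset.univ : Finset (Fin (l + 1))) :=
    Finset.mem_univ _
  rw [TT, TT, ← Finset.add_sum_erase _ _ hmem, ← Finset.add_sum_erase _ _ hmem,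
    if_pos (show m ≤ (m : ℕ) - s + s by omega), if_neg (show ¬ m + 1 ≤ m - s + s by omega),
    zero_add, rnk_eq hs1 hm]
  congr 1
  refine Finset.sum_congr rfl fun i hi => ?_
  have hne : (i : ℕ) ≠ m - s := fun h => (Finset.mem_erase.1 hi).1 (Fin.ext h)
  by_cases h2 : m + 1 ≤ (i : ℕ) + s
  · rw [if_pos (by omega), if_pos h2]
  · rw [if_neg (by omega), if_neg h2]

lemma NN_mono {m : ℕ} : NN a (m + 1) ≤ NN a m :=
  Submodule.map_mono (blockFil_antitone (by exact_mod_cast Nat.le_succ m))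

lemma NN_le_fil (htri : ∀ i j : Fin (l + 1), (i : ℕ) + s < (j : ℕ) → a i j = 0) (m : ℕ) :
    NN a m ≤ blockFil k l d ((m : ℤ) - s) :=
  map_blockEnd_le htri (m : ℤ)

lemma NN_le_inf (htri : ∀ i j : Fin (l + 1), (i : ℕ) + s < (j : ℕ) → a i j = 0) {m : ℕ}
    (hs1 : s ≤ m) :
    NN a (m + 1) ≤ NN a m ⊓ blockFil k l d ((m : ℤ) - s + 1) := by
  refine le_inf NN_mono ?_
  have h := NN_le_fil (s := s) htri (m + 1)
  have e : ((m + 1 : ℕ) : ℤ) - s = (m : ℤ) - s + 1 := by push_cast; ring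
  rwa [e] at h

lemma finrank_NN (htri : ∀ i j : Fin (l + 1), (i : ℕ) + s < (j : ℕ) → a i j = 0)
    {m : ℕ} (hs1 : s ≤ m) (hm : m ≤ l) :
    Module.finrank k (NN a m) =
      (a ⟨m - s, by omega⟩ ⟨m, by omega⟩).rank
        + Module.finrank k ↥(NN a m ⊓ blockFil k l d ((m : ℤ) - s + 1)) := by
  set i₀ : Fin (l + 1) := ⟨m - s, by omega⟩ with hi₀
  set j₀ : Fin (l + 1) := ⟨m, by omega⟩ with hj₀
  set q : Submodule k (∀ i : Fin (l + 1), Fin (d i) → k) := NN a m with hq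
  set p : (∀ i : Fin (l + 1), Fin (d i) → k) →ₗ[k] (Fin (d i₀) → k) := LinearMap.proj i₀ with hp
  set f : q →ₗ[k] (Fin (d i₀) → k) := p ∘ₗ q.subtype with hf
  have h1 : Module.finrank k (LinearMap.range f) + Module.finrank k (LinearMap.ker f)
      = Module.finrank k q := LinearMap.finrank_range_add_finrank_ker f
  have hrange : LinearMap.range f = Submodule.map p q := by
    rw [hf, LinearMap.range_comp, Submodule.range_subtype]
  have hmap : Submodule.map p q = LinearMap.range (a i₀ j₀).mulVecLin := by
    apply le_antisymm
    · rintro x hx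
      obtain ⟨w, hw, rfl⟩ := hx
      obtain ⟨v, hv, rfl⟩ := hw
      exact ⟨v j₀, (blockEnd_proj htri hs1 hm hv).symm⟩
    · rintro _ ⟨x, rfl⟩
      have hmem : Pi.single j₀ x ∈ blockFil k l d (m : ℤ) := by
        intro i hi
        have hne : i ≠ j₀ := by
          intro h
          subst h
          simp only [hj₀] at hi
          omega
        exact Pi.single_eq_of_ne (M := fun i => Fin (d i) → k) hne x
      refine ⟨blockEnd k l d a (Pi.single j₀ x), ⟨Pi.single j₀ x, hmem, rfl⟩, ?_⟩
      show blockEnd k l d a (Pi.single j₀ x) i₀ = _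
      rw [blockEnd_proj htri hs1 hm hmem, Pi.single_eq_same, Matrix.mulVecLin_apply]
  have hkereq : Submodule.comap q.subtype (LinearMap.ker p)
      = Submodule.comap q.subtype (q ⊓ blockFil k l d ((m : ℤ) - s + 1)) := by
    ext x
    simp only [Submodule.mem_comap, LinearMap.mem_ker, Submodule.mem_inf]
    constructor
    · intro h
      refine ⟨x.2, fun i hi => ?_⟩
      by_cases hlt : (i : ℤ) < (m : ℤ) - s
      · exact NN_le_fil htri m x.2 i hlt
      · have : i = i₀ := Fin.ext (by simp only [hi₀]; omega)
        rw [this]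
        exact h
    · rintro ⟨-, h2⟩
      show (x : ∀ i : Fin (l + 1), Fin (d i) → k) i₀ = 0
      exact h2 i₀ (by simp only [hi₀]; push_cast; omega)
  have hker : Module.finrank k (LinearMap.ker f)
      = Module.finrank k ↥(q ⊓ blockFil k l d ((m : ℤ) - s + 1)) := by
    rw [hf, LinearMap.ker_comp, hkereq]
    exact LinearEquiv.finrank_eq (Submodule.comapSubtypeEquivOfLe inf_le_left)
  rw [← h1, hrange, hmap, hker, Matrix.rank]

lemma TT_le_finrank (htri : ∀ i j : Fin (l + 1), (i : ℕ) + s < (j : ℕ) → a i j = 0) :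
    ∀ t m : ℕ, l + 1 ≤ m + t → TT s a m ≤ Module.finrank k (NN a m) := by
  intro t
  induction t with
  | zero =>
    intro m hm
    rw [TT_gt (by omega)]
    exact Nat.zero_le _
  | succ t ih =>
    intro m hm
    by_cases h1 : l + 1 ≤ m + t
    · exact ih m h1
    · have hml : m ≤ l := by omega
      have hrec : TT s a (m + 1) ≤ Module.finrank k (NN a (m + 1)) := ih (m + 1) (by omega)
      by_cases h2 : s ≤ m
      · rw [TT_succ h2 hml, finrank_NN htri h2 hml]
        exact Nat.add_le_add_left
          (hrec.trans (Submodule.finrank_mono (NN_le_inf htri h2))) _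
      · rw [TT_lt (by omega)]
        exact hrec.trans (Submodule.finrank_mono NN_mono)

lemma finrank_NN_eq (htri : ∀ i j : Fin (l + 1), (i : ℕ) + s < (j : ℕ) → a i j = 0)
    (hspecial : Module.finrank k (LinearMap.range (blockEnd k l d a))
      = ∑ i : Fin (l + 1),
          if h : (i : ℕ) + s ≤ l then (a i ⟨(i : ℕ) + s, Nat.lt_succ_of_le h⟩).rank else 0) :
    ∀ m : ℕ, m ≤ l + 1 → Module.finrank k (NN a m) = TT s a m := by
  intro m
  induction m with
  | zero =>
    intro _
    have h0 : NN a 0 = LinearMap.range (blockEnd k l d a) := by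
      rw [NN, Nat.cast_zero, blockFil_eq_top le_rfl, Submodule.map_top]
    rw [h0, hspecial, TT_zero]
  | succ m ih =>
    intro hm1
    have hm := ih (by omega)
    have hlow := TT_le_finrank htri (l + 1) (m + 1) (by omega)
    refine le_antisymm ?_ hlow
    by_cases h2 : s ≤ m
    · have h3 := finrank_NN htri h2 (by omega)
      have h4 : Module.finrank k (NN a (m + 1))
          ≤ Module.finrank k ↥(NN a m ⊓ blockFil k l d ((m : ℤ) - s + 1)) :=
        Submodule.finrank_mono (NN_le_inf htri h2)
      have h5 := TT_succ (a := a) h2 (show m ≤ l by omega)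
      omega
    · have h6 : Module.finrank k (NN a (m + 1)) ≤ Module.finrank k (NN a m) :=
        Submodule.finrank_mono NN_mono
      have h7 := TT_lt (a := a) (show m < s by omega)
      omega

lemma NN_inf (htri : ∀ i j : Fin (l + 1), (i : ℕ) + s < (j : ℕ) → a i j = 0)
    (hspecial : Module.finrank k (LinearMap.range (blockEnd k l d a))
      = ∑ i : Fin (l + 1),
          if h : (i : ℕ) + s ≤ l then (a i ⟨(i : ℕ) + s, Nat.lt_succ_of_le h⟩).rank else 0)
    {m : ℕ} (hs1 : s ≤ m) (hm : m ≤ l) :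
    NN a m ⊓ blockFil k l d ((m : ℤ) - s + 1) = NN a (m + 1) := by
  refine (Submodule.eq_of_le_of_finrank_le (NN_le_inf htri hs1) ?_).symm
  have h1 := finrank_NN htri hs1 hm
  have h2 := finrank_NN_eq htri hspecial m (by omega)
  have h3 := finrank_NN_eq htri hspecial (m + 1) (by omega)
  have h4 := TT_succ (a := a) hs1 hm
  omega

lemma NN_eq_range (htri : ∀ i j : Fin (l + 1), (i : ℕ) + s < (j : ℕ) → a i j = 0)
    (hs : s ≤ l)
    (hspecial : Module.finrank k (LinearMap.range (blockEnd k l d a))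
      = ∑ i : Fin (l + 1),
          if h : (i : ℕ) + s ≤ l then (a i ⟨(i : ℕ) + s, Nat.lt_succ_of_le h⟩).rank else 0) :
    ∀ m : ℕ, m ≤ s → NN a m = LinearMap.range (blockEnd k l d a) := by
  intro m
  induction m with
  | zero =>
    intro _
    rw [NN, Nat.cast_zero, blockFil_eq_top le_rfl, Submodule.map_top]
  | succ m ih =>
    intro hm1
    rw [← ih (by omega)]
    refine Submodule.eq_of_le_of_finrank_le NN_mono ?_
    rw [finrank_NN_eq htri hspecial m (by omega),
      finrank_NN_eq htri hspecial (m + 1) (by omega), TT_lt (by omega)]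

lemma range_inf_fil (htri : ∀ i j : Fin (l + 1), (i : ℕ) + s < (j : ℕ) → a i j = 0)
    (hs : s ≤ l)
    (hspecial : Module.finrank k (LinearMap.range (blockEnd k l d a))
      = ∑ i : Fin (l + 1),
          if h : (i : ℕ) + s ≤ l then (a i ⟨(i : ℕ) + s, Nat.lt_succ_of_le h⟩).rank else 0) :
    ∀ n : ℕ, n ≤ l - s + 1 →
      LinearMap.range (blockEnd k l d a) ⊓ blockFil k l d (n : ℤ) = NN a (n + s) := by
  intro n
  induction n with
  | zero =>
    intro _
    rw [Nat.cast_zero, blockFil_eq_top le_rfl, inf_top_eq, zero_add]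
    exact (NN_eq_range htri hs hspecial s le_rfl).symm
  | succ n ih =>
    intro hn1
    have hfle : blockFil k l d ((n + 1 : ℕ) : ℤ) ≤ blockFil k l d (n : ℤ) :=
      blockFil_antitone (by push_cast; omega)
    have step : LinearMap.range (blockEnd k l d a) ⊓ blockFil k l d ((n + 1 : ℕ) : ℤ)
        = (LinearMap.range (blockEnd k l d a) ⊓ blockFil k l d (n : ℤ))
          ⊓ blockFil k l d ((n + 1 : ℕ) : ℤ) := by
      rw [inf_assoc, inf_eq_right.2 hfle]
    rw [step, ih (by omega)]
    have e : ((n + 1 : ℕ) : ℤ) = ((n + s : ℕ) : ℤ) - s + 1 := by push_cast; ring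
    rw [e, NN_inf htri hspecial (by omega) (by omega)]
    congr 1
    omega


end Aux

/-- If the block matrix `M = (a_{i,j})` is special lower-triangular of
type `≤ s`, then for every `i ≤ l − s + 1`,
`im(𝕄) ∩ Fil^i V ⊆ (im(𝕄) ∩ Fil^{i+1} V) + 𝕄(Fil^{i+s} V)`. -/
theorem stmt_10 (k : Type*) [Field k] (l s : ℕ) (hs : s ≤ l) (d : Fin (l + 1) → ℕ)
    (a : ∀ i j : Fin (l + 1), Matrix (Fin (d i)) (Fin (d j)) k)
    (htri : ∀ i j : Fin (l + 1), (i : ℕ) + s < (j : ℕ) → a i j = 0)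
    (hspecial : Module.finrank k (LinearMap.range (blockEnd k l d a))
      = ∑ i : Fin (l + 1),
          if h : (i : ℕ) + s ≤ l then (a i ⟨(i : ℕ) + s, by omega⟩).rank else 0) :
    ∀ i : ℤ, i ≤ (l : ℤ) - s + 1 →
      LinearMap.range (blockEnd k l d a) ⊓ blockFil k l d i
        ≤ (LinearMap.range (blockEnd k l d a) ⊓ blockFil k l d (i + 1))
          ⊔ Submodule.map (blockEnd k l d a) (blockFil k l d (i + s)) := by
  intro i hi
  refine le_trans ?_ le_sup_right
  by_cases hi0 : i ≤ 0
  · refine le_trans inf_le_left ?_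
    rw [← NN_eq_range htri hs hspecial s le_rfl]
    exact Submodule.map_mono (blockFil_antitone (by push_cast; omega))
  · set n : ℕ := i.toNat with hn
    have hni : (n : ℤ) = i := Int.toNat_of_nonneg (by omega)
    have key := range_inf_fil htri hs hspecial n (by omega)
    rw [hni] at key
    rw [key, NN]
    exact Submodule.map_mono (blockFil_antitone (by push_cast; omega))
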